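/- Let ∅ = F_0 ⊂ F_1 ⊂ ⋯ ⊂ F_k ⊂ F_{k+1} = E be a chain of flats of M and let x ∈ ℝ^L with x ≥ 0. Suppose that for every choice of sets S_0,…,S_k with S_i ⊆ F_{i+1} \ F_i and S_i ∪ F_i a flat of M for each i, the inequality ∑_{l∈L} a(S_0 ∪ ⋯ ∪ S_k)_l x_l ≤ ∑_{i=0}^{k} (r(S_i ∪ F_i) − r(F_i)) holds. Then x is a fractional matching in (M, L), i.e., ∑_{l∈L} a(T)_l x_l ≤ r(T) for every flat T of M. -/

import Mathlib

open Set

variable {α : Type*}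

/-- The rank of a set in a matroid: the supremum of the cardinalities of its
independent subsets. -/
noncomputable def Matroid.rk' (M : Matroid α) (X : Set α) : ℕ :=
  sSup {n : ℕ | ∃ I, M.Indep I ∧ I ⊆ X ∧ I.ncard = n}

/-- A matroid is loopless if the closure of the empty set is empty. -/
def Matroid.Loopless' (M : Matroid α) : Prop := M.closure ∅ = ∅

/-- A line of a matroid: a subset of the ground set of rank 1 or 2. -/
def Matroid.IsLine (M : Matroid α) (l : Set α) : Prop :=
  l ⊆ M.E ∧ (M.rk' l = 1 ∨ M.rk' l = 2)

open scoped Classical in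
/-- Degree `a(X)_l` of a set `X` at a line `l`. -/
noncomputable def deg (X l : Set α) : ℕ :=
  if X ∩ l = ∅ then 0 else if l ⊆ X then 2 else 1

/-- A fractional matching of the pair `(M, L)`. -/
def IsFracMatching (M : Matroid α) (L : Finset (Set α)) (x : Set α → ℝ) : Prop :=
  (∀ l ∈ L, 0 ≤ x l) ∧
  ∀ F : Set α, M.IsFlat F → ∑ l ∈ L, (deg F l : ℝ) * x l ≤ (M.rk' F : ℝ)

/-- `a(y)_l` for a finitely supported `y` on flats. -/
noncomputable def aDual (y : Set α →₀ ℝ) (l : Set α) : ℝ :=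
  y.sum fun F c => c * (deg F l : ℝ)

/-- `r(y)` for a finitely supported `y` on flats. -/
noncomputable def rDual (M : Matroid α) (y : Set α →₀ ℝ) : ℝ :=
  y.sum fun F c => c * (M.rk' F : ℝ)


namespace Matroid

variable {M : Matroid α} {I J X Y A B : Set α}

lemma rk'_eq_ncard_of_basis' [M.RankFinite] (hI : M.IsBasis' I X) : M.rk' X = I.ncard := by
  apply IsGreatest.csSup_eq
  constructor
  · exact ⟨I, hI.indep, hI.subset, rfl⟩
  · rintro n ⟨J, hJ, hJX, rfl⟩
    obtain ⟨J', hJ', hJJ'⟩ := hJ.subset_isBasis'_of_subset hJX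
    have hcard : I.encard = J'.encard := hI.encard_eq_encard hJ'
    calc J.ncard ≤ J'.ncard := Set.ncard_le_ncard hJJ' hJ'.indep.finite
      _ = I.ncard := by rw [Set.ncard_def, Set.ncard_def, hcard]

lemma ncard_le_rk' [M.RankFinite] (hJ : M.Indep J) (hJX : J ⊆ X) : J.ncard ≤ M.rk' X := by
  obtain ⟨I, hI⟩ := M.exists_isBasis' X
  rw [rk'_eq_ncard_of_basis' hI]
  obtain ⟨J', hJ', hJJ'⟩ := hJ.subset_isBasis'_of_subset hJX
  have hcard : I.encard = J'.encard := hI.encard_eq_encard hJ'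
  calc J.ncard ≤ J'.ncard := Set.ncard_le_ncard hJJ' hJ'.indep.finite
    _ = I.ncard := by rw [Set.ncard_def, Set.ncard_def, hcard]

lemma rk'_mono [M.RankFinite] (h : X ⊆ Y) : M.rk' X ≤ M.rk' Y := by
  obtain ⟨I, hI⟩ := M.exists_isBasis' X
  rw [rk'_eq_ncard_of_basis' hI]
  exact ncard_le_rk' hI.indep (hI.subset.trans h)

lemma rk'_closure_eq [M.RankFinite] (X : Set α) : M.rk' (M.closure X) = M.rk' X := by
  obtain ⟨I, hI⟩ := M.exists_isBasis' X
  rw [rk'_eq_ncard_of_basis' hI, rk'_eq_ncard_of_basis' hI.isBasis_closure_right.isBasis']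

lemma rk'_empty [M.RankFinite] : M.rk' (∅ : Set α) = 0 := by
  obtain ⟨I, hI⟩ := M.exists_isBasis' (∅ : Set α)
  rw [rk'_eq_ncard_of_basis' hI, subset_empty_iff.1 hI.subset, Set.ncard_empty]

lemma rk'_inter_ground [M.RankFinite] (X : Set α) : M.rk' (X ∩ M.E) = M.rk' X := by
  obtain ⟨I, hI⟩ := M.exists_isBasis' X
  rw [rk'_eq_ncard_of_basis' hI, rk'_eq_ncard_of_basis' hI.isBasis_inter_ground.isBasis']

lemma flat_closure' (M : Matroid α) (X : Set α) : M.IsFlat (M.closure X) := by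
  constructor
  · intro I Y hI hIY
    have h1 : Y ⊆ M.closure I := hIY.subset_closure
    have h2 : M.closure I = M.closure X := by
      rw [hI.closure_eq_closure, closure_closure]
    rwa [h2] at h1
  · exact M.closure_subset_ground X

lemma rk'_submod [M.RankFinite] (A B : Set α) :
    M.rk' (A ∪ B) + M.rk' (A ∩ B) ≤ M.rk' A + M.rk' B := by
  obtain ⟨I, hI⟩ := M.exists_isBasis' (A ∩ B)
  obtain ⟨J, hJ, hIJ⟩ := hI.indep.subset_isBasis'_of_subset
    (hI.subset.trans (inter_subset_left.trans subset_union_left))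
  rw [rk'_eq_ncard_of_basis' hJ, rk'_eq_ncard_of_basis' hI]
  have hJfin : J.Finite := hJ.indep.finite
  have h1 : (J ∩ A).ncard ≤ M.rk' A :=
    ncard_le_rk' (hJ.indep.subset inter_subset_left) inter_subset_right
  have h2 : (J ∩ B).ncard ≤ M.rk' B :=
    ncard_le_rk' (hJ.indep.subset inter_subset_left) inter_subset_right
  have hu : (J ∩ A) ∪ (J ∩ B) = J := by
    rw [← inter_union_distrib_left]
    exact inter_eq_self_of_subset_left hJ.subset
  have hi : (J ∩ A) ∩ (J ∩ B) = J ∩ (A ∩ B) := by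
    ext a; simp only [mem_inter_iff]; tauto
  have hkey := Set.ncard_union_add_ncard_inter (J ∩ A) (J ∩ B)
    (hJfin.subset inter_subset_left) (hJfin.subset inter_subset_left)
  rw [hu, hi] at hkey
  have hIsub : I ⊆ J ∩ (A ∩ B) := subset_inter hIJ hI.subset
  have hIle : I.ncard ≤ (J ∩ (A ∩ B)).ncard :=
    Set.ncard_le_ncard hIsub (hJfin.subset inter_subset_left)
  omega

end Matroid


open scoped Classical in
lemma deg_mono {X Y l : Set α} (h : X ⊆ Y) : deg X l ≤ deg Y l := by
  unfold deg
  by_cases hx : X ∩ l = ∅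
  · rw [if_pos hx]; exact Nat.zero_le _
  · have hy : Y ∩ l ≠ ∅ := fun hY => hx (subset_empty_iff.1 (hY ▸ inter_subset_inter_left l h))
    rw [if_neg hx, if_neg hy]
    by_cases hlx : l ⊆ X
    · rw [if_pos hlx, if_pos (hlx.trans h)]
    · rw [if_neg hlx]; split_ifs <;> omega

/-- a fractional matching of `(M⋆𝓕, L)` is a fractional matching of `(M, L)`. -/
theorem stmt_8 (M : Matroid α) [M.RankFinite] (hM : M.Loopless')
    (L : Finset (Set α)) (hL : ∀ l ∈ L, M.IsLine l)
    (k : ℕ) (F : ℕ → Set α) (hF0 : F 0 = ∅) (hFE : F (k+1) = M.E)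
    (hFflat : ∀ i ≤ k+1, M.IsFlat (F i)) (hFmono : ∀ i ≤ k, F i ⊂ F (i+1))
    (x : Set α → ℝ) (hx0 : ∀ l ∈ L, 0 ≤ x l)
    (hstar : ∀ S : ℕ → Set α,
      (∀ i ≤ k, S i ⊆ F (i+1) \ F i ∧ M.IsFlat (S i ∪ F i)) →
      ∑ l ∈ L, (deg (⋃ i ∈ Finset.range (k+1), S i) l : ℝ) * x l
        ≤ ∑ i ∈ Finset.range (k+1), ((M.rk' (S i ∪ F i) : ℝ) - (M.rk' (F i) : ℝ))) :
    IsFracMatching M L x := by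
  classical
  refine ⟨hx0, fun T hT => ?_⟩
  set S : ℕ → Set α := fun i => M.closure ((T ∩ F (i+1)) ∪ F i) \ F i with hSdef
  have hsubE : ∀ i ≤ k, (T ∩ F (i+1)) ∪ F i ⊆ F (i+1) := fun i hi =>
    union_subset inter_subset_right (hFmono i hi).subset
  have hE : ∀ i ≤ k, (T ∩ F (i+1)) ∪ F i ⊆ M.E := fun i hi =>
    (hsubE i hi).trans (hFflat (i+1) (by omega)).subset_ground
  have hFicl : ∀ i ≤ k, F i ⊆ M.closure ((T ∩ F (i+1)) ∪ F i) := fun i hi =>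
    subset_union_right.trans (M.subset_closure _ (hE i hi))
  have heq : ∀ i ≤ k, S i ∪ F i = M.closure ((T ∩ F (i+1)) ∪ F i) := by
    intro i hi
    rw [hSdef]
    simp only
    rw [diff_union_self, union_eq_self_of_subset_right (hFicl i hi)]
  have hcond : ∀ i ≤ k, S i ⊆ F (i+1) \ F i ∧ M.IsFlat (S i ∪ F i) := by
    intro i hi
    have hclsub : M.closure ((T ∩ F (i+1)) ∪ F i) ⊆ F (i+1) := by
      have h := M.closure_subset_closure (hsubE i hi)
      rwa [(hFflat (i+1) (by omega)).closure] at h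
    exact ⟨diff_subset_diff_left hclsub, (heq i hi) ▸ M.flat_closure' _⟩
  -- T is contained in the union of the S i
  have hTU : T ⊆ ⋃ i ∈ Finset.range (k+1), S i := by
    intro t ht
    have htE : t ∈ F (k+1) := by rw [hFE]; exact hT.subset_ground ht
    have hex : ∃ j, j ≤ k ∧ t ∈ F (j+1) := ⟨k, le_rfl, htE⟩
    set j := Nat.find hex with hjdef
    obtain ⟨hjk, hjt⟩ := Nat.find_spec hex
    have hnot : t ∉ F j := by
      rcases Nat.eq_zero_or_pos j with h | h
      · rw [h, hF0]; exact notMem_empty t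
      · have hmin := Nat.find_min hex (m := j - 1) (by omega)
        push_neg at hmin
        have := hmin (by omega)
        rwa [Nat.sub_add_cancel h] at this
    have htS : t ∈ S j := by
      refine ⟨M.subset_closure _ (hE j hjk) (Or.inl ⟨ht, hjt⟩), hnot⟩
    exact Set.mem_biUnion (Finset.mem_range.2 (by omega)) htS
  have hLHS : ∑ l ∈ L, (deg T l : ℝ) * x l
      ≤ ∑ l ∈ L, (deg (⋃ i ∈ Finset.range (k+1), S i) l : ℝ) * x l := by
    refine Finset.sum_le_sum fun l hl => mul_le_mul_of_nonneg_right ?_ (hx0 l hl)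
    exact_mod_cast deg_mono hTU
  have hRHS : ∑ i ∈ Finset.range (k+1), ((M.rk' (S i ∪ F i) : ℝ) - (M.rk' (F i) : ℝ))
      ≤ (M.rk' T : ℝ) := by
    have hterm : ∀ i ∈ Finset.range (k+1),
        (M.rk' (S i ∪ F i) : ℝ) - (M.rk' (F i) : ℝ)
          ≤ (M.rk' (T ∩ F (i+1)) : ℝ) - (M.rk' (T ∩ F i) : ℝ) := by
      intro i hi
      rw [Finset.mem_range] at hi
      have hik : i ≤ k := by omega
      have hsm := M.rk'_submod (T ∩ F (i+1)) (F i)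
      have hAB : (T ∩ F (i+1)) ∩ F i = T ∩ F i := by
        rw [inter_assoc, inter_eq_self_of_subset_right (hFmono i hik).subset]
      rw [hAB] at hsm
      have hcl : M.rk' (S i ∪ F i) = M.rk' ((T ∩ F (i+1)) ∪ F i) := by
        rw [heq i hik, M.rk'_closure_eq]
      rw [hcl]
      have hsm' : (M.rk' ((T ∩ F (i+1)) ∪ F i) : ℝ) + (M.rk' (T ∩ F i) : ℝ)
          ≤ (M.rk' (T ∩ F (i+1)) : ℝ) + (M.rk' (F i) : ℝ) := by exact_mod_cast hsm
      linarith
    calc ∑ i ∈ Finset.range (k+1), ((M.rk' (S i ∪ F i) : ℝ) - (M.rk' (F i) : ℝ))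
        ≤ ∑ i ∈ Finset.range (k+1), ((M.rk' (T ∩ F (i+1)) : ℝ) - (M.rk' (T ∩ F i) : ℝ)) :=
          Finset.sum_le_sum hterm
      _ = (M.rk' (T ∩ F (k+1)) : ℝ) - (M.rk' (T ∩ F 0) : ℝ) :=
          Finset.sum_range_sub (fun i => (M.rk' (T ∩ F i) : ℝ)) (k+1)
      _ ≤ (M.rk' T : ℝ) := by
          rw [hF0, hFE, inter_empty, Matroid.rk'_empty, inter_eq_self_of_subset_left hT.subset_ground]
          simp
  exact hLHS.trans ((hstar S hcond).trans hRHS)
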